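/- Let u : ℝ^d → ℝ be convex and nonnegative, and suppose u vanishes on the hyperplane {x : x·e = 0} for some unit vector e. Then u(x) depends only on x·e; that is, u(x) = u((x·e)e) for all x, equivalently u(x) = u(y) whenever x·e = y·e. -/

import Mathlib

lemma aux_convex_hyperplane_le {d : ℕ}
    (u : EuclideanSpace ℝ (Fin d) → ℝ)
    (hconv : ConvexOn ℝ Set.univ u)
    (e : EuclideanSpace ℝ (Fin d)) (he : ‖e‖ = 1)
    (hzero : ∀ x, inner (𝕜 := ℝ) x e = (0 : ℝ) → u x = 0) :
    ∀ x y, inner (𝕜 := ℝ) x e = (inner (𝕜 := ℝ) y e : ℝ) → u x ≤ u y := by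
  intro x y h
  set t : ℝ := inner (𝕜 := ℝ) y e with ht
  have hee : (inner (𝕜 := ℝ) e e : ℝ) = 1 := by
    rw [real_inner_self_eq_norm_sq, he]; norm_num
  have ucont : Continuous u :=
    continuousOn_univ.mp (hconv.continuousOn isOpen_univ)
  have key : ∀ a : ℝ, a ∈ Set.Ioo (0:ℝ) 1 →
      u x ≤ (1-a) * u (y + ((a*t)/(1-a)) • e) := by
    rintro a ⟨ha0, ha1⟩
    have ha : a ≠ 0 := ne_of_gt ha0
    have ha1' : (1:ℝ) - a ≠ 0 := by linarith
    set p := y - t • e + a⁻¹ • (x - y) with hp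
    set z := y + ((a*t)/(1-a)) • e with hz
    have hpe : inner (𝕜 := ℝ) p e = (0:ℝ) := by
      rw [hp]
      rw [inner_add_left, inner_sub_left, inner_smul_left, inner_smul_left,
        inner_sub_left, hee, h, ← ht]
      simp
    have hcomb : a • p + (1-a) • z = x := by
      rw [hp, hz]
      match_scalars <;> field_simp <;> ring
    have := hconv.2 (Set.mem_univ p) (Set.mem_univ z) ha0.le (by linarith : (0:ℝ) ≤ 1-a)
      (by ring)
    rw [hcomb, hzero p hpe] at this
    simpa using this
  have hlim : Filter.Tendsto (fun a : ℝ => (1-a) * u (y + ((a*t)/(1-a)) • e))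
      (nhdsWithin 0 (Set.Ioi 0)) (nhds (u y)) := by
    have hc : ContinuousAt (fun a : ℝ => (1-a) * u (y + ((a*t)/(1-a)) • e)) 0 := by
      apply ContinuousAt.mul (by fun_prop)
      apply (ucont.continuousAt).comp
      apply ContinuousAt.add continuousAt_const
      refine ContinuousAt.smul (f := fun a : ℝ => (a*t)/(1-a)) (g := fun _ : ℝ => e) ?_ continuousAt_const
      exact ContinuousAt.div (by fun_prop) (by fun_prop) (by norm_num)
    have h0 : (fun a : ℝ => (1-a) * u (y + ((a*t)/(1-a)) • e)) 0 = u y := by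
      norm_num
    have := hc.tendsto.mono_left (nhdsWithin_le_nhds (s := Set.Ioi (0:ℝ)))
    simpa using this
  apply ge_of_tendsto hlim
  filter_upwards [Ioo_mem_nhdsGT_of_mem (by norm_num : (0:ℝ) ∈ Set.Ico 0 1)] with a ha
  exact key a ha

/-- A convex nonnegative function on `ℝ^d` vanishing on the hyperplane `{x·e = 0}`
(for a unit vector `e`) depends only on `x·e`: `u x = u y` whenever `x·e = y·e`. -/
theorem convex_vanishing_hyperplane_one_dimensional {d : ℕ}
    (u : EuclideanSpace ℝ (Fin d) → ℝ)
    (hconv : ConvexOn ℝ Set.univ u) (hnn : ∀ x, 0 ≤ u x)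
    (e : EuclideanSpace ℝ (Fin d)) (he : ‖e‖ = 1)
    (hzero : ∀ x, inner (𝕜 := ℝ) x e = (0 : ℝ) → u x = 0) :
    ∀ x y, inner (𝕜 := ℝ) x e = (inner (𝕜 := ℝ) y e : ℝ) → u x = u y := by
  intro x y h
  exact le_antisymm (aux_convex_hyperplane_le u hconv e he hzero x y h)
    (aux_convex_hyperplane_le u hconv e he hzero y x h.symm)
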